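/- For every real number z, exp(-z) - 1 + z ≥ z² / (2 + |z|). -/

import Mathlib

open Real

-- For x ≥ 0, (2+x)(exp(-x) - 1 + x) ≥ x²
lemma aux_nonneg (x : ℝ) (hx : 0 ≤ x) :
    x ^ 2 ≤ (2 + x) * (Real.exp (-x) - 1 + x) := by
  set g : ℝ → ℝ := fun t => (2 + t) * (Real.exp (-t) - 1 + t) - t ^ 2 with hg
  have hderiv : ∀ t : ℝ, HasDerivAt g (1 - (1 + t) * Real.exp (-t)) t := by
    intro t
    have h1 : HasDerivAt (fun t : ℝ => Real.exp (-t)) (-Real.exp (-t)) t := by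
      simpa [Function.comp_def] using (Real.hasDerivAt_exp (-t)).comp t (hasDerivAt_neg t)
    have h2 : HasDerivAt (fun t : ℝ => Real.exp (-t) - 1 + t) (-Real.exp (-t) + 1) t := by
      simpa [Pi.add_def] using ((h1.sub_const 1).add (hasDerivAt_id t))
    have h3 : HasDerivAt (fun t : ℝ => 2 + t) 1 t := by
      simpa using (hasDerivAt_id t).const_add 2
    have h4 := (h3.mul h2).sub ((hasDerivAt_pow 2 t))
    refine h4.congr_deriv ?_
    push_cast
    ring
  have hmono : MonotoneOn g (Set.Ici (0 : ℝ)) := by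
    apply monotoneOn_of_deriv_nonneg (convex_Ici 0)
    · exact Continuous.continuousOn (by
        continuity)
    · intro t ht
      exact (hderiv t).differentiableAt.differentiableWithinAt
    · intro t ht
      rw [(hderiv t).deriv]
      rw [interior_Ici] at ht
      have ht' : (0:ℝ) < t := ht
      have h5 : t + 1 ≤ Real.exp t := Real.add_one_le_exp t
      have h6 : (1 + t) * Real.exp (-t) ≤ Real.exp t * Real.exp (-t) := by
        apply mul_le_mul_of_nonneg_right _ (Real.exp_pos _).le
        linarith
      rw [← Real.exp_add] at h6
      simp at h6
      linarith
  have h0 : g 0 = 0 := by simp [hg]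
  have := hmono (Set.self_mem_Ici) (Set.mem_Ici.mpr hx) hx
  rw [h0] at this
  simp only [hg] at this
  linarith

theorem exp_neg_sub_one_add_ge (z : ℝ) :
    Real.exp (-z) - 1 + z ≥ z ^ 2 / (2 + |z|) := by
  have habs : (0:ℝ) < 2 + |z| := by positivity
  rw [ge_iff_le, div_le_iff₀ habs]
  rcases le_or_gt 0 z with hz | hz
  · rw [abs_of_nonneg hz]
    have := aux_nonneg z hz
    nlinarith
  · rw [abs_of_neg hz]
    -- z < 0; let x = -z > 0; exp x - 1 - x ≥ x²/2 ≥ x²/(2+x)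
    have hx : 0 ≤ -z := by linarith
    have h5 : 1 + (-z) + (-z)^2/2 ≤ Real.exp (-z) := by
      have key : ∀ x : ℝ, 0 ≤ x → 1 + x + x^2/2 ≤ Real.exp x := by
        intro x hxx
        set h : ℝ → ℝ := fun t => Real.exp t - 1 - t - t ^ 2 / 2 with hh
        have hderiv : ∀ t : ℝ, HasDerivAt h (Real.exp t - 1 - t) t := by
          intro t
          have := (((Real.hasDerivAt_exp t).sub_const 1).sub (hasDerivAt_id t)).sub
            ((hasDerivAt_pow 2 t).div_const 2)
          refine this.congr_deriv ?_
          push_cast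
          ring
        have hmono : MonotoneOn h (Set.Ici (0 : ℝ)) := by
          apply monotoneOn_of_deriv_nonneg (convex_Ici 0)
          · exact Continuous.continuousOn (by continuity)
          · intro t ht
            exact (hderiv t).differentiableAt.differentiableWithinAt
          · intro t ht
            rw [(hderiv t).deriv]
            have := Real.add_one_le_exp t
            linarith
        have h0 : h 0 = 0 := by simp [hh]
        have := hmono Set.self_mem_Ici (Set.mem_Ici.mpr hxx) hxx
        rw [h0] at this
        simp only [hh] at this
        linarith
      exact key (-z) hx
    nlinarith [sq_nonneg z, mul_nonneg (sq_nonneg z) hx]
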